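/- arXiv:math/0004166 — 2 statements merged into one kernel-verified Lean document; each statement's English description precedes it below -/
import Mathlib

section
/- If an infinite-dimensional Banach space X satisfies δ̄_X(1/2) > 0, then X has the point of continuity property. -/
open Filter Topology

/-- The modulus of asymptotic uniform convexity
`δ̄_X(ε) = inf_{x ∈ S(X)} sup_Y inf_{y ∈ S(Y)} (‖x + εy‖ − 1)`, where `Y` ranges
over the closed finite-codimensional subspaces of `X`. -/
noncomputable def aucMod (X : Type*) [NormedAddCommGroup X] [NormedSpace ℝ X] (ε : ℝ) : ℝ :=
  sInf { d : ℝ | ∃ x : X, ‖x‖ = 1 ∧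
    d = sSup { c : ℝ | ∃ Y : Submodule ℝ X, IsClosed (Y : Set X) ∧
      FiniteDimensional ℝ (X ⧸ Y) ∧
      c = sInf { r : ℝ | ∃ y ∈ Y, ‖y‖ = 1 ∧ r = ‖x + ε • y‖ - 1 } } }

/-- `V` is open in the weak topology of the normed space `X`: around each of its
points it contains a basic weak neighbourhood determined by finitely many
continuous functionals. -/
def IsWeaklyOpen {X : Type*} [NormedAddCommGroup X] [NormedSpace ℝ X] (V : Set X) : Prop :=
  ∀ x ∈ V, ∃ (s : Finset (X →L[ℝ] ℝ)) (δ : ℝ), 0 < δ ∧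
    { y : X | ∀ f ∈ s, |f y - f x| < δ } ⊆ V

/-- `X` has the point of continuity property (PCP): every nonempty bounded subset
of `X` admits nonempty relatively weakly open subsets of arbitrarily small
diameter. -/
def HasPCP (X : Type*) [NormedAddCommGroup X] [NormedSpace ℝ X] : Prop :=
  ∀ A : Set X, A.Nonempty → Bornology.IsBounded A → ∀ ε : ℝ, 0 < ε →
    ∃ V : Set X, IsWeaklyOpen V ∧ (V ∩ A).Nonempty ∧ Metric.diam (V ∩ A) < ε

section Aux

variable {X : Type*} [NormedAddCommGroup X] [NormedSpace ℝ X] [CompleteSpace X]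

/-- A closed finite-codimensional subspace controls distances weakly. -/
theorem aucAux_approx (Y : Submodule ℝ X) (hYc : IsClosed (Y : Set X))
    (hYf : FiniteDimensional ℝ (X ⧸ Y)) (η : ℝ) (hη : 0 < η) :
    ∃ (s : Finset (X →L[ℝ] ℝ)) (δ : ℝ), 0 < δ ∧
      ∀ v : X, (∀ f ∈ s, |f v| < δ) → ∃ z ∈ Y, ‖v - z‖ < η := by
  classical
  haveI : IsClosed (Y : Set X) := hYc
  haveI : FiniteDimensional ℝ (X ⧸ Y) := hYf
  let π : X →L[ℝ] (X ⧸ Y) := LinearMap.mkContinuous Y.mkQ 1 (fun m => by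
    simpa [Y.mkQ_apply] using Submodule.Quotient.norm_mk_le (S := Y) m)
  set n := Module.finrank ℝ (X ⧸ Y)
  let b := Module.finBasis ℝ (X ⧸ Y)
  let e : (X ⧸ Y) ≃L[ℝ] (Fin n → ℝ) := b.equivFun.toContinuousLinearEquiv
  set C : ℝ := ‖(e.symm : (Fin n → ℝ) →L[ℝ] (X ⧸ Y))‖ + 1 with hC
  have hCpos : 0 < C := by positivity
  let c : Fin n → (X →L[ℝ] ℝ) := fun i =>
    (ContinuousLinearMap.proj i).comp ((e : (X ⧸ Y) →L[ℝ] (Fin n → ℝ)).comp π)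
  refine ⟨Finset.image c Finset.univ, η / (2 * C), by positivity, fun v hv => ?_⟩
  have hcoord : ∀ i : Fin n, |c i v| ≤ η / (2 * C) := fun i =>
    le_of_lt (hv _ (Finset.mem_image_of_mem c (Finset.mem_univ i)))
  have hsup : ‖e (π v)‖ ≤ η / (2 * C) := by
    rw [pi_norm_le_iff_of_nonneg (by positivity)]
    intro i
    simpa [c] using hcoord i
  have hq : ‖π v‖ < η := by
    have h1 : ‖π v‖ = ‖e.symm (e (π v))‖ := by simp
    rw [h1]
    calc ‖(e.symm : (Fin n → ℝ) →L[ℝ] (X ⧸ Y)) (e (π v))‖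
        ≤ ‖(e.symm : (Fin n → ℝ) →L[ℝ] (X ⧸ Y))‖ * ‖e (π v)‖ :=
          ContinuousLinearMap.le_opNorm _ _
      _ ≤ C * (η / (2 * C)) := by
          apply mul_le_mul (by simp [hC]) hsup (norm_nonneg _) hCpos.le
      _ < η := by
          rw [mul_div_assoc', div_lt_iff₀ (by positivity)]
          nlinarith
  have hqv : (π v : X ⧸ Y) = Submodule.Quotient.mk v := rfl
  rw [hqv] at hq
  obtain ⟨m, hm, hmlt⟩ := Submodule.Quotient.norm_mk_lt (Submodule.Quotient.mk v : X ⧸ Y)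
    (show (0:ℝ) < η - ‖(Submodule.Quotient.mk v : X ⧸ Y)‖ by linarith)
  exact ⟨v - m, (Submodule.Quotient.eq Y).mp hm.symm,
    by simpa using hmlt.trans_le (by linarith)⟩

/-- Any closed finite-codimensional subspace of an infinite-dimensional space
contains a unit vector. -/
theorem aucAux_exists_unit (hX : ¬ FiniteDimensional ℝ X) (Y : Submodule ℝ X)
    (hYf : FiniteDimensional ℝ (X ⧸ Y)) : ∃ u ∈ Y, ‖u‖ = (1:ℝ) := by
  have hY : Y ≠ ⊥ := by
    rintro rfl
    exact hX ((Submodule.quotEquivOfEqBot (⊥ : Submodule ℝ X) rfl).finiteDimensional)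
  obtain ⟨y, hyY, hy0⟩ := Submodule.exists_mem_ne_zero_of_ne_bot hY
  exact ⟨(‖y‖⁻¹ : ℝ) • y, Y.smul_mem _ hyY, norm_smul_inv_norm (𝕜 := ℝ) hy0⟩

/-- Some closed finite-codimensional subspace exists (kernel of a functional). -/
theorem aucAux_exists_fincodim (hX : ¬ FiniteDimensional ℝ X) :
    ∃ Y : Submodule ℝ X, IsClosed (Y : Set X) ∧ FiniteDimensional ℝ (X ⧸ Y) := by
  have : Nontrivial X := by
    by_contra hnt
    rw [not_nontrivial_iff_subsingleton] at hnt
    exact hX (Module.Finite.of_basis (Module.Basis.empty X (ι := Empty)))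
  obtain ⟨x, hx⟩ := exists_ne (0 : X)
  obtain ⟨g, _, _⟩ := exists_dual_vector ℝ x (norm_ne_zero_iff.mpr hx)
  refine ⟨LinearMap.ker (g : X →ₗ[ℝ] ℝ), ContinuousLinearMap.isClosed_ker g, ?_⟩
  have e := (LinearMap.ker (g : X →ₗ[ℝ] ℝ)).quotEquivOfEq (LinearMap.ker (g : X →ₗ[ℝ] ℝ)) rfl
  exact ((g : X →ₗ[ℝ] ℝ).quotKerEquivRange.symm.trans e).finiteDimensional

/-- Extraction from positivity of the modulus: a uniform `δ` and good subspaces. -/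
theorem aucAux_extract (hX : ¬ FiniteDimensional ℝ X) (h : 0 < aucMod X (1 / 2)) :
    ∃ δ : ℝ, 0 < δ ∧ δ ≤ 1 ∧ ∀ x : X, ‖x‖ = 1 →
      ∃ Y : Submodule ℝ X, IsClosed (Y : Set X) ∧ FiniteDimensional ℝ (X ⧸ Y) ∧
        ∀ u ∈ Y, ‖u‖ = 1 → 1 + δ ≤ ‖x + (1/2 : ℝ) • u‖ := by
  classical
  set δ₀ := aucMod X (1 / 2) with hδ₀
  set S := { d : ℝ | ∃ x : X, ‖x‖ = 1 ∧
    d = sSup { c : ℝ | ∃ Y : Submodule ℝ X, IsClosed (Y : Set X) ∧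
      FiniteDimensional ℝ (X ⧸ Y) ∧
      c = sInf { r : ℝ | ∃ y ∈ Y, ‖y‖ = 1 ∧ r = ‖x + (1/2 : ℝ) • y‖ - 1 } } } with hS
  have hSdef : δ₀ = sInf S := rfl
  refine ⟨min (δ₀ / 2) 1, by positivity, min_le_right _ _, fun x hx => ?_⟩
  set Cx := { c : ℝ | ∃ Y : Submodule ℝ X, IsClosed (Y : Set X) ∧
      FiniteDimensional ℝ (X ⧸ Y) ∧
      c = sInf { r : ℝ | ∃ y ∈ Y, ‖y‖ = 1 ∧ r = ‖x + (1/2 : ℝ) • y‖ - 1 } } with hCx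
  -- each element of Cx is at least -1
  have hCxlb : ∀ c ∈ Cx, (-1 : ℝ) ≤ c := by
    rintro c ⟨Y, hYc, hYf, rfl⟩
    obtain ⟨u, huY, hu⟩ := aucAux_exists_unit hX Y hYf
    refine le_csInf ⟨‖x + (1/2 : ℝ) • u‖ - 1, ⟨u, huY, hu, rfl⟩⟩ ?_
    rintro r ⟨y, hyY, hy, rfl⟩
    have := norm_nonneg (x + (1/2 : ℝ) • y)
    linarith
  have hCxne : Cx.Nonempty := by
    obtain ⟨Y, hYc, hYf⟩ := aucAux_exists_fincodim hX
    exact ⟨_, Y, hYc, hYf, rfl⟩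
  have hCxbdd : BddBelow Cx := ⟨-1, hCxlb⟩
  -- each element of Cx is at most 1/2
  have hCxub : ∀ c ∈ Cx, c ≤ (1/2 : ℝ) := by
    rintro c ⟨Y, hYc, hYf, rfl⟩
    obtain ⟨u, huY, hu⟩ := aucAux_exists_unit hX Y hYf
    refine csInf_le_of_le ?_ ⟨u, huY, hu, rfl⟩ ?_
    · refine ⟨-1, ?_⟩
      rintro r ⟨y, hyY, hy, rfl⟩
      have := norm_nonneg (x + (1/2 : ℝ) • y)
      linarith
    · have h1 : ‖x + (1/2 : ℝ) • u‖ ≤ ‖x‖ + ‖(1/2 : ℝ) • u‖ := norm_add_le _ _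
      rw [norm_smul] at h1
      simp only [hx, hu] at h1
      rw [Real.norm_eq_abs] at h1
      nlinarith [abs_nonneg (1/2 : ℝ), (abs_of_pos (by norm_num : (0:ℝ) < 1/2))]
  -- the outer set is bounded below by -1
  have hSlb : ∀ d ∈ S, (-1 : ℝ) ≤ d := by
    rintro d ⟨x', hx', rfl⟩
    set Cx' := { c : ℝ | ∃ Y : Submodule ℝ X, IsClosed (Y : Set X) ∧
      FiniteDimensional ℝ (X ⧸ Y) ∧
      c = sInf { r : ℝ | ∃ y ∈ Y, ‖y‖ = 1 ∧ r = ‖x' + (1/2 : ℝ) • y‖ - 1 } }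
    obtain ⟨Y, hYc, hYf⟩ := aucAux_exists_fincodim hX
    have hc : sInf { r : ℝ | ∃ y ∈ Y, ‖y‖ = 1 ∧ r = ‖x' + (1/2 : ℝ) • y‖ - 1 } ∈ Cx' :=
      ⟨Y, hYc, hYf, rfl⟩
    refine le_trans ?_ (le_csSup ?_ hc)
    · obtain ⟨u, huY, hu⟩ := aucAux_exists_unit hX Y hYf
      refine le_csInf ⟨‖x' + (1/2 : ℝ) • u‖ - 1, ⟨u, huY, hu, rfl⟩⟩ ?_
      rintro r ⟨y, hyY, hy, rfl⟩
      have := norm_nonneg (x' + (1/2 : ℝ) • y)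
      linarith
    · refine ⟨1/2, ?_⟩
      rintro c ⟨Y', hY'c, hY'f, rfl⟩
      obtain ⟨u, huY, hu⟩ := aucAux_exists_unit hX Y' hY'f
      refine csInf_le_of_le ⟨-1, ?_⟩ ⟨u, huY, hu, rfl⟩ ?_
      · rintro r ⟨y, hyY, hy, rfl⟩
        have := norm_nonneg (x' + (1/2 : ℝ) • y)
        linarith
      · have h1 : ‖x' + (1/2 : ℝ) • u‖ ≤ ‖x'‖ + ‖(1/2 : ℝ) • u‖ := norm_add_le _ _
        rw [norm_smul] at h1
        simp only [hx', hu] at h1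
        rw [Real.norm_eq_abs] at h1
        nlinarith [(abs_of_pos (by norm_num : (0:ℝ) < 1/2))]
  -- δ₀ ≤ sSup Cx
  have hmem : sSup Cx ∈ S := ⟨x, hx, rfl⟩
  have hle : δ₀ ≤ sSup Cx := by
    rw [hSdef]
    exact csInf_le ⟨-1, hSlb⟩ hmem
  have hlt : δ₀ / 2 < sSup Cx := lt_of_lt_of_le (by linarith) hle
  obtain ⟨c, hcCx, hc⟩ := exists_lt_of_lt_csSup hCxne hlt
  obtain ⟨Y, hYc, hYf, rfl⟩ := hcCx
  refine ⟨Y, hYc, hYf, fun u huY hu => ?_⟩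
  have hmem' : ‖x + (1/2 : ℝ) • u‖ - 1 ∈
      { r : ℝ | ∃ y ∈ Y, ‖y‖ = 1 ∧ r = ‖x + (1/2 : ℝ) • y‖ - 1 } := ⟨u, huY, hu, rfl⟩
  have hinf_le : sInf { r : ℝ | ∃ y ∈ Y, ‖y‖ = 1 ∧ r = ‖x + (1/2 : ℝ) • y‖ - 1 } ≤
      ‖x + (1/2 : ℝ) • u‖ - 1 := by
    refine csInf_le ⟨-1, ?_⟩ hmem'
    rintro r ⟨y, hyY, hy, rfl⟩
    have := norm_nonneg (x + (1/2 : ℝ) • y)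
    linarith
  have : min (δ₀ / 2) 1 ≤ δ₀ / 2 := min_le_left _ _
  linarith



/-- Convexity/scaling: growth of the norm along a direction in the good subspace. -/
theorem aucAux_grow {X : Type*} [NormedAddCommGroup X] [NormedSpace ℝ X] (δ : ℝ) (hδ : 0 ≤ δ) (v z : X) (hv : v ≠ 0)
    (hz2 : ‖v‖ / 2 ≤ ‖z‖)
    (hu : 1 + δ ≤ ‖(‖v‖⁻¹ : ℝ) • v + (1/2 : ℝ) • ((‖z‖⁻¹ : ℝ) • z)‖) :
    ‖v‖ * (1 + δ) ≤ ‖v + z‖ := by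
  have hvpos : 0 < ‖v‖ := norm_pos_iff.mpr hv
  have hz0 : z ≠ 0 := by
    intro hz; rw [hz, norm_zero] at hz2; linarith
  have hzpos : 0 < ‖z‖ := norm_pos_iff.mpr hz0
  set u : X := (‖z‖⁻¹ : ℝ) • z with hudef
  set s : ℝ := ‖v‖ / 2 with hs
  set t : ℝ := ‖z‖ with ht
  have hspos : 0 < s := by positivity
  have hzu : z = t • u := by
    rw [hudef, smul_smul, ht, mul_inv_cancel₀ hzpos.ne', one_smul]
  -- step 1 : ‖v + s • u‖ ≥ ‖v‖ * (1 + δ)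
  have hstep1 : ‖v‖ * (1 + δ) ≤ ‖v + s • u‖ := by
    have heq : v + s • u = ‖v‖ • ((‖v‖⁻¹ : ℝ) • v + (1/2 : ℝ) • u) := by
      rw [hudef, hs, ht]
      match_scalars <;> field_simp
    rw [heq, norm_smul, Real.norm_eq_abs, abs_of_pos hvpos]
    exact mul_le_mul_of_nonneg_left hu hvpos.le
  -- step 2 : monotonicity from convexity
  set lam : ℝ := s / t with hlam
  have hlam0 : 0 < lam := by positivity
  have hlam1 : lam ≤ 1 := by
    rw [hlam, div_le_one hzpos]; exact hz2
  have hcvx : v + s • u = (1 - lam) • v + lam • (v + t • u) := by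
    rw [hudef, hlam, ht]
    match_scalars <;> field_simp <;> ring
  have hineq : ‖v + s • u‖ ≤ (1 - lam) * ‖v‖ + lam * ‖v + t • u‖ := by
    rw [hcvx]
    refine (norm_add_le _ _).trans ?_
    rw [norm_smul, norm_smul, Real.norm_eq_abs, Real.norm_eq_abs,
      abs_of_nonneg (by linarith), abs_of_pos hlam0]
  have hvle : ‖v‖ ≤ ‖v + s • u‖ := le_trans (by nlinarith) hstep1
  have hfin : ‖v + s • u‖ ≤ ‖v + t • u‖ := by nlinarith
  rw [hzu]
  linarith

end Aux

theorem isWeaklyOpen_basic {X : Type*} [NormedAddCommGroup X] [NormedSpace ℝ X]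
    (x : X) (s : Finset (X →L[ℝ] ℝ)) (c : ℝ) (hc : 0 < c) :
    IsWeaklyOpen { y : X | ∀ f ∈ s, |f y - f x| < c } := by
  classical
  intro y₀ hy₀
  set T : Finset ℝ := insert c (s.image fun f => c - |f y₀ - f x|) with hT
  have hTne : T.Nonempty := Finset.insert_nonempty _ _
  refine ⟨s, T.min' hTne, ?_, ?_⟩
  · rw [Finset.lt_min'_iff]
    intro b hb
    rw [hT, Finset.mem_insert] at hb
    rcases hb with rfl | hb
    · exact hc
    · obtain ⟨f, hf, rfl⟩ := Finset.mem_image.mp hb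
      have := hy₀ f hf
      linarith
  · intro y hy f hf
    have h1 : |f y - f y₀| < T.min' hTne := hy f hf
    have h2 : T.min' hTne ≤ c - |f y₀ - f x| :=
      Finset.min'_le _ _ (Finset.mem_insert_of_mem (Finset.mem_image_of_mem _ hf))
    calc |f y - f x| ≤ |f y - f y₀| + |f y₀ - f x| := by
          have := abs_sub_abs_le_abs_sub (f y - f x) (f y₀ - f x)
          calc |f y - f x| = |(f y - f y₀) + (f y₀ - f x)| := by ring_nf
            _ ≤ |f y - f y₀| + |f y₀ - f x| := abs_add_le _ _
      _ < c := by linarith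

theorem isWeaklyOpen_univ {X : Type*} [NormedAddCommGroup X] [NormedSpace ℝ X] :
    IsWeaklyOpen (Set.univ : Set X) :=
  fun _ _ => ⟨∅, 1, one_pos, Set.subset_univ _⟩


/-- **Proposition.** If an infinite-dimensional Banach space `X`
satisfies `δ̄_X(1/2) > 0`, then `X` has the point of continuity property. -/
theorem hasPCP_of_aucMod_half_pos
    (X : Type*) [NormedAddCommGroup X] [NormedSpace ℝ X] [CompleteSpace X]
    (hX : ¬ FiniteDimensional ℝ X)
    (h : 0 < aucMod X (1 / 2)) : HasPCP X := by
  classical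
  intro A hA hAb ε hε
  obtain ⟨δ, hδ0, hδ1, hgood⟩ := aucAux_extract hX h
  set P := {r : ℝ | ∃ V : Set X, ∃ b : X, IsWeaklyOpen V ∧ b ∈ V ∩ A ∧
    ∀ y ∈ V ∩ A, ‖y - b‖ ≤ r} with hP
  have hPne : P.Nonempty := by
    obtain ⟨a, ha⟩ := hA
    obtain ⟨R, hR⟩ := hAb.subset_closedBall a
    refine ⟨R, Set.univ, a, isWeaklyOpen_univ, ⟨Set.mem_univ a, ha⟩, fun y hy => ?_⟩
    have := hR hy.2
    rw [Metric.mem_closedBall, dist_eq_norm] at this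
    exact this
  have hP0 : ∀ r ∈ P, 0 ≤ r := by
    rintro r ⟨V, b, hV, hb, hr⟩
    simpa using hr b hb
  have hPbdd : BddBelow P := ⟨0, hP0⟩
  set m := sInf P with hm
  have hm0 : 0 ≤ m := le_csInf hPne hP0
  by_cases hcase : m < ε / 3
  · obtain ⟨r, hrP, hr⟩ := exists_lt_of_csInf_lt hPne hcase
    obtain ⟨V, b, hV, hb, hball⟩ := hrP
    refine ⟨V, hV, ⟨b, hb⟩, ?_⟩
    have hr0 : 0 ≤ r := hP0 r ⟨V, b, hV, hb, hball⟩
    have hdiam : Metric.diam (V ∩ A) ≤ 2 * r := by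
      apply Metric.diam_le_of_forall_dist_le (by linarith)
      intro y hy y' hy'
      calc dist y y' ≤ dist y b + dist b y' := dist_triangle _ _ _
        _ = ‖y - b‖ + ‖y' - b‖ := by rw [dist_eq_norm, dist_comm b y', dist_eq_norm]
        _ ≤ r + r := add_le_add (hball y hy) (hball y' hy')
        _ = 2 * r := by ring
    linarith
  · exfalso
    push_neg at hcase
    have hmpos : 0 < m := lt_of_lt_of_le (by linarith) hcase
    have hlt : m < m * (1 + δ / 8) := by nlinarith
    obtain ⟨r, hrP, hrlt⟩ := exists_lt_of_csInf_lt hPne hlt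
    obtain ⟨V₀, b, hV₀, hbV, hball⟩ := hrP
    have hnot : ¬ ∀ y ∈ V₀ ∩ A, ‖y - b‖ ≤ m * (1 - δ / 8) := by
      intro hcon
      have hmem : m * (1 - δ / 8) ∈ P := ⟨V₀, b, hV₀, hbV, hcon⟩
      have := csInf_le hPbdd hmem
      nlinarith
    push_neg at hnot
    obtain ⟨x, hxV, hxfar⟩ := hnot
    set v := x - b with hv
    have hvlb : m * (1 - δ / 8) < ‖v‖ := hxfar
    have hvpos : 0 < ‖v‖ := lt_of_le_of_lt (by nlinarith) hvlb
    have hvne : v ≠ 0 := norm_pos_iff.mp hvpos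
    have hvub : ‖v‖ ≤ r := hball x hxV
    have hunit : ‖(‖v‖⁻¹ : ℝ) • v‖ = 1 := norm_smul_inv_norm (𝕜 := ℝ) hvne
    obtain ⟨Y, hYc, hYf, hYgood⟩ := hgood _ hunit
    obtain ⟨s, δ', hδ', happ⟩ := aucAux_approx Y hYc hYf (m * δ / 8) (by positivity)
    obtain ⟨s₀, δ₀, hδ₀, hsub⟩ := hV₀ x hxV.1
    set c := min δ₀ δ' with hcdef
    have hc : 0 < c := lt_min hδ₀ hδ'
    set V₁ := {y : X | ∀ f ∈ s₀ ∪ s, |f y - f x| < c} with hV₁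
    have hV₁o : IsWeaklyOpen V₁ := isWeaklyOpen_basic x (s₀ ∪ s) c hc
    have hV₁sub : V₁ ⊆ V₀ := by
      intro y hy
      apply hsub
      intro f hf
      exact lt_of_lt_of_le (hy f (Finset.mem_union_left _ hf)) (min_le_left _ _)
    have hxV₁ : x ∈ V₁ ∩ A := ⟨fun f _ => by simpa using hc, hxV.2⟩
    have hnot2 : ¬ ∀ y ∈ V₁ ∩ A, ‖y - x‖ ≤ m * (1 - δ / 8) := by
      intro hcon
      have hmem : m * (1 - δ / 8) ∈ P := ⟨V₁, x, hV₁o, hxV₁, hcon⟩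
      have := csInf_le hPbdd hmem
      nlinarith
    push_neg at hnot2
    obtain ⟨y, hyV₁, hyfar⟩ := hnot2
    set w := y - x with hw
    have hws : ∀ f ∈ s, |f w| < δ' := by
      intro f hf
      have h1 := hyV₁.1 f (Finset.mem_union_right _ hf)
      have h2 : f w = f y - f x := by rw [hw, map_sub]
      rw [h2]
      exact lt_of_lt_of_le h1 (min_le_right _ _)
    obtain ⟨z, hzY, hwz⟩ := happ w hws
    have hwlb : m * (1 - δ / 8) < ‖w‖ := hyfar
    have hwnorm : ‖w‖ ≤ ‖w - z‖ + ‖z‖ := by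
      calc ‖w‖ = ‖(w - z) + z‖ := by rw [sub_add_cancel]
        _ ≤ ‖w - z‖ + ‖z‖ := norm_add_le _ _
    have hzlb : m * (1 - δ / 4) ≤ ‖z‖ := by nlinarith
    have hz2 : ‖v‖ / 2 ≤ ‖z‖ := by nlinarith
    have hzpos : 0 < ‖z‖ := by nlinarith
    have hzne : z ≠ 0 := norm_pos_iff.mp hzpos
    have hugrow : ‖v‖ * (1 + δ) ≤ ‖v + z‖ :=
      aucAux_grow δ hδ0.le v z hvne hz2
        (hYgood _ (Y.smul_mem _ hzY) (norm_smul_inv_norm (𝕜 := ℝ) hzne))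
    have hyb : ‖y - b‖ ≤ r := hball y ⟨hV₁sub hyV₁.1, hyV₁.2⟩
    have hybeq : y - b = (v + z) + (w - z) := by
      rw [hv, hw]; abel
    have hyblb : ‖v + z‖ - ‖w - z‖ ≤ ‖y - b‖ := by
      have h3 : ‖v + z‖ ≤ ‖y - b‖ + ‖w - z‖ := by
        calc ‖v + z‖ = ‖(y - b) - (w - z)‖ := by rw [hybeq]; abel_nf
          _ ≤ ‖y - b‖ + ‖w - z‖ := norm_sub_le _ _
      linarith
    have h4 : m * (1 - δ / 8) * (1 + δ) ≤ ‖v + z‖ := by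
      refine le_trans ?_ hugrow
      have := mul_le_mul_of_nonneg_right hvlb.le (show (0:ℝ) ≤ 1 + δ by linarith)
      linarith
    have h5 : ‖v + z‖ < m * (1 + δ / 8) + m * δ / 8 := by linarith
    have h6 : m * (1 - δ / 8) * (1 + δ) < m * (1 + δ / 8) + m * δ / 8 :=
      lt_of_le_of_lt h4 h5
    have h7 : (0:ℝ) < m * δ * (5 - δ) / 8 := by
      have h5δ : (0:ℝ) < 5 - δ := by linarith
      positivity
    have h8 : m * (1 + δ / 8) + m * δ / 8 + m * δ * (5 - δ) / 8
        = m * (1 - δ / 8) * (1 + δ) := by ring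
    linarith
end

section
/- For the space ℓ₁ of absolutely summable real sequences, δ̄_{ℓ₁}(ε) = ε for every ε ∈ [0,1]. -/
open Filter Topology

section Aux

private noncomputable abbrev X1 := lp (fun _ : ℕ => ℝ) 1

private lemma l1_hasSum_abs (f : X1) : HasSum (fun i => |f i|) ‖f‖ := by
  have h := lp.hasSum_norm (p := 1) (E := fun _ : ℕ => ℝ) (by simp) f
  simpa using h

private lemma l1_coe_add_smul (x y : X1) (ε : ℝ) (i : ℕ) :
    (x + ε • y) i = x i + ε * y i := by
  rfl

private lemma l1_single_norm_one (n : ℕ) : ‖(lp.single 1 n (1:ℝ) : X1)‖ = 1 := by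
  have := lp.norm_single (p := 1) (E := fun _ : ℕ => ℝ) (by simp) n (1:ℝ)
  simpa using this

private lemma l1_single_apply' (n i : ℕ) :
    (lp.single 1 n (1:ℝ) : X1) i = if i = n then 1 else 0 := by
  rcases eq_or_ne i n with h | h
  · subst h; simp [lp.single_apply_self]
  · simp [lp.single_apply_ne 1 n _ h, h]

private lemma l1_li_single :
    LinearIndependent ℝ (fun n : ℕ => (lp.single 1 n (1:ℝ) : X1)) := by
  rw [linearIndependent_iff']
  intro s g h i hi
  have h2 := congrFun (congrArg (fun f : X1 => (f : ∀ _ : ℕ, ℝ)) h) i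
  simp only [lp.coeFn_sum, Finset.sum_apply, lp.coeFn_zero, Pi.zero_apply] at h2
  simp only [lp.coeFn_smul, Pi.smul_apply, l1_single_apply', smul_eq_mul, mul_ite,
    mul_one, mul_zero] at h2
  rwa [Finset.sum_ite_eq s i g, if_pos hi] at h2

private lemma l1_not_findim : ¬ FiniteDimensional ℝ X1 := fun _ =>
  Module.Finite.not_linearIndependent_of_infinite _ l1_li_single

private lemma l1_exists_unit (Y : Submodule ℝ X1) (hfd : FiniteDimensional ℝ (X1 ⧸ Y)) :
    ∃ y ∈ Y, ‖y‖ = 1 := by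
  have hY : Y ≠ ⊥ := by
    intro hbot
    refine l1_not_findim ?_
    refine FiniteDimensional.of_injective (Y.mkQ) ?_
    rw [← LinearMap.ker_eq_bot, Submodule.ker_mkQ, hbot]
  obtain ⟨y, hyY, hy0⟩ := Submodule.exists_mem_ne_zero_of_ne_bot hY
  refine ⟨‖y‖⁻¹ • y, Y.smul_mem _ hyY, ?_⟩
  rw [norm_smul, norm_inv, norm_norm, inv_mul_cancel₀ (norm_ne_zero_iff.mpr hy0)]

private def l1_evalL (i : ℕ) : X1 →ₗ[ℝ] ℝ where
  toFun f := f i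
  map_add' f g := by simp [lp.coeFn_add]
  map_smul' c f := by simp [lp.coeFn_smul]

private noncomputable def l1_evalC (i : ℕ) : X1 →L[ℝ] ℝ :=
  LinearMap.mkContinuous (l1_evalL i) 1 (fun f => by
    show ‖f i‖ ≤ 1 * ‖f‖
    simpa using lp.norm_apply_le_norm (E := fun _ : ℕ => ℝ) one_ne_zero f i)

private noncomputable def l1_projC (N : ℕ) : X1 →L[ℝ] (Fin N → ℝ) :=
  ContinuousLinearMap.pi (fun i => l1_evalC i)

private noncomputable def l1_tailSp (N : ℕ) : Submodule ℝ X1 := LinearMap.ker (l1_projC N : X1 →ₗ[ℝ] (Fin N → ℝ))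

private lemma l1_mem_tailSp {N : ℕ} {f : X1} :
    f ∈ l1_tailSp N ↔ ∀ i : ℕ, i < N → f i = 0 := by
  constructor
  · intro h i hi
    have := congrFun (LinearMap.mem_ker.mp h) ⟨i, hi⟩
    exact this
  · intro h
    refine LinearMap.mem_ker.mpr (funext fun i => ?_)
    exact h i i.2

private lemma l1_isClosed_tailSp (N : ℕ) : IsClosed ((l1_tailSp N : Submodule ℝ X1) : Set X1) :=
  ContinuousLinearMap.isClosed_ker (l1_projC N)

private lemma l1_tailSp_findim (N : ℕ) : FiniteDimensional ℝ (X1 ⧸ l1_tailSp N) := by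
  have e := ((l1_projC N).toLinearMap).quotKerEquivRange
  have : FiniteDimensional ℝ (LinearMap.range (l1_projC N).toLinearMap) := inferInstance
  exact Module.Finite.equiv e.symm

private lemma l1_key_low (ε : ℝ) (hε0 : 0 ≤ ε) (x y : X1) (hx : ‖x‖ = 1) (hy : ‖y‖ = 1)
    (N : ℕ) (hyN : ∀ i < N, y i = 0) :
    1 + ε - 2 * (1 - ∑ i ∈ Finset.range N, |x i|) ≤ ‖x + ε • y‖ := by
  set s := Finset.range N with hs
  have hx1 : HasSum (fun i => |x i|) 1 := hx ▸ l1_hasSum_abs x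
  have hy1 : HasSum (fun i => |y i|) 1 := hy ▸ l1_hasSum_abs y
  have hz : HasSum (fun i => |(x + ε • y) i|) ‖x + ε • y‖ := l1_hasSum_abs _
  have hsplit : ∑ i ∈ s, |(x + ε • y) i| + ∑' i : {i // i ∉ s}, |(x + ε • y) ↑i|
      = ‖x + ε • y‖ := by
    rw [← hz.tsum_eq]
    exact Summable.sum_add_tsum_compl hz.summable
  have h1 : ∑ i ∈ s, |(x + ε • y) i| = ∑ i ∈ s, |x i| := by
    refine Finset.sum_congr rfl fun i hi => ?_
    rw [l1_coe_add_smul, hyN i (Finset.mem_range.mp hi), mul_zero, add_zero]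
  have hxs : ∑ i ∈ s, |x i| + ∑' i : {i // i ∉ s}, |x ↑i| = 1 := by
    rw [← hx1.tsum_eq]; exact Summable.sum_add_tsum_compl hx1.summable
  have hys : ∑' i : {i // i ∉ s}, |y ↑i| = 1 := by
    have h2 : ∑ i ∈ s, |y i| + ∑' i : {i // i ∉ s}, |y ↑i| = 1 := by
      rw [← hy1.tsum_eq]; exact Summable.sum_add_tsum_compl hy1.summable
    have h0 : ∑ i ∈ s, |y i| = 0 := by
      refine Finset.sum_eq_zero fun i hi => ?_
      rw [hyN i (Finset.mem_range.mp hi), abs_zero]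
    linarith
  have hsummx : Summable fun i : {i // i ∉ s} => |x ↑i| := hx1.summable.subtype _
  have hsummy : Summable fun i : {i // i ∉ s} => |y ↑i| := hy1.summable.subtype _
  have hle : ∑' i : {i // i ∉ s}, (ε * |y ↑i| - |x ↑i|)
      ≤ ∑' i : {i // i ∉ s}, |(x + ε • y) ↑i| := by
    refine Summable.tsum_le_tsum (fun i => ?_) ((hsummy.mul_left ε).sub hsummx)
      (hz.summable.subtype _)
    rw [l1_coe_add_smul]
    have h5 := abs_sub_abs_le_abs_sub (ε * y ↑i) (-(x ↑i))
    rw [abs_neg, sub_neg_eq_add] at h5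
    calc ε * |y ↑i| - |x ↑i| = |ε * y ↑i| - |x ↑i| := by
          rw [abs_mul, abs_of_nonneg hε0]
      _ ≤ |ε * y ↑i + x ↑i| := h5
      _ = |x ↑i + ε * y ↑i| := by rw [add_comm]
  have htail : ∑' i : {i // i ∉ s}, (ε * |y ↑i| - |x ↑i|)
      = ε * 1 - (1 - ∑ i ∈ s, |x i|) := by
    rw [Summable.tsum_sub (hsummy.mul_left ε) hsummx, tsum_mul_left, hys]
    have : ∑' i : {i // i ∉ s}, |x ↑i| = 1 - ∑ i ∈ s, |x i| := by linarith
    rw [this]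
  nlinarith [hle, htail, hsplit, h1]

private lemma l1_inner_eq (ε : ℝ) (hε0 : 0 ≤ ε) (hε1 : ε ≤ 1) (x : X1) (hx : ‖x‖ = 1) :
    sSup { c : ℝ | ∃ Y : Submodule ℝ X1, IsClosed (Y : Set X1) ∧
      FiniteDimensional ℝ (X1 ⧸ Y) ∧
      c = sInf { r : ℝ | ∃ y ∈ Y, ‖y‖ = 1 ∧ r = ‖x + ε • y‖ - 1 } } = ε := by
  set T := { c : ℝ | ∃ Y : Submodule ℝ X1, IsClosed (Y : Set X1) ∧
      FiniteDimensional ℝ (X1 ⧸ Y) ∧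
      c = sInf { r : ℝ | ∃ y ∈ Y, ‖y‖ = 1 ∧ r = ‖x + ε • y‖ - 1 } } with hT
  have hub : ∀ c ∈ T, c ≤ ε := by
    rintro c ⟨Y, hYc, hYf, rfl⟩
    obtain ⟨y₀, hy₀Y, hy₀⟩ := l1_exists_unit Y hYf
    have hbdd : BddBelow { r : ℝ | ∃ y ∈ Y, ‖y‖ = 1 ∧ r = ‖x + ε • y‖ - 1 } := by
      refine ⟨-1, ?_⟩
      rintro r ⟨y, -, -, rfl⟩
      have := norm_nonneg (x + ε • y)
      linarith
    have hmem : (‖x + ε • y₀‖ - 1) ∈ { r : ℝ | ∃ y ∈ Y, ‖y‖ = 1 ∧ r = ‖x + ε • y‖ - 1 } :=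
      ⟨y₀, hy₀Y, hy₀, rfl⟩
    have h1 : sInf { r : ℝ | ∃ y ∈ Y, ‖y‖ = 1 ∧ r = ‖x + ε • y‖ - 1 } ≤ ‖x + ε • y₀‖ - 1 :=
      csInf_le hbdd hmem
    have h2 : ‖x + ε • y₀‖ ≤ 1 + ε := by
      calc ‖x + ε • y₀‖ ≤ ‖x‖ + ‖ε • y₀‖ := norm_add_le _ _
        _ = 1 + ε := by rw [hx, norm_smul, hy₀, Real.norm_eq_abs, abs_of_nonneg hε0, mul_one]
    linarith
  have hlow : ∀ δ : ℝ, 0 < δ → ∃ c ∈ T, ε - δ ≤ c := by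
    intro δ hδ
    have hx1 : HasSum (fun i => |x i|) 1 := hx ▸ l1_hasSum_abs x
    have htend := hx1.tendsto_sum_nat
    have hev : ∀ᶠ n in atTop, 1 - δ/2 < ∑ i ∈ Finset.range n, |x i| :=
      htend.eventually (eventually_gt_nhds (by linarith))
    obtain ⟨N, hN⟩ := hev.exists
    refine ⟨sInf { r : ℝ | ∃ y ∈ l1_tailSp N, ‖y‖ = 1 ∧ r = ‖x + ε • y‖ - 1 },
      ⟨l1_tailSp N, l1_isClosed_tailSp N, l1_tailSp_findim N, rfl⟩, ?_⟩
    refine le_csInf ?_ ?_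
    · refine ⟨‖x + ε • (lp.single 1 N (1:ℝ) : X1)‖ - 1, lp.single 1 N (1:ℝ), ?_,
        l1_single_norm_one N, rfl⟩
      refine l1_mem_tailSp.mpr fun i hi => ?_
      rw [l1_single_apply', if_neg (Nat.ne_of_lt hi)]
    · rintro r ⟨y, hyY, hy, rfl⟩
      have hk := l1_key_low ε hε0 x y hx hy N (l1_mem_tailSp.mp hyY)
      linarith
  obtain ⟨c₁, hc₁T, -⟩ := hlow 1 one_pos
  have hne : T.Nonempty := ⟨c₁, hc₁T⟩
  have hbddT : BddAbove T := ⟨ε, hub⟩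
  refine le_antisymm (csSup_le hne hub) ?_
  refine le_of_forall_pos_le_add fun δ hδ => ?_
  obtain ⟨c, hcT, hc⟩ := hlow δ hδ
  have := le_csSup hbddT hcT
  linarith

end Aux

/-- For the space `ℓ₁` of absolutely summable real sequences,
`δ̄_{ℓ₁}(ε) = ε` for every `ε ∈ [0,1]`. -/
theorem aucMod_l1
    (ε : ℝ) (hε : ε ∈ Set.Icc (0 : ℝ) 1) :
    aucMod (lp (fun _ : ℕ => ℝ) 1) ε = ε := by
  obtain ⟨hε0, hε1⟩ := hε
  rw [aucMod]
  have hset : { d : ℝ | ∃ x : lp (fun _ : ℕ => ℝ) 1, ‖x‖ = 1 ∧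
      d = sSup { c : ℝ | ∃ Y : Submodule ℝ (lp (fun _ : ℕ => ℝ) 1), IsClosed (Y : Set (lp (fun _ : ℕ => ℝ) 1)) ∧
        FiniteDimensional ℝ (lp (fun _ : ℕ => ℝ) 1 ⧸ Y) ∧
        c = sInf { r : ℝ | ∃ y ∈ Y, ‖y‖ = 1 ∧ r = ‖x + ε • y‖ - 1 } } } = {ε} := by
    ext d
    simp only [Set.mem_setOf_eq, Set.mem_singleton_iff]
    constructor
    · rintro ⟨x, hx, rfl⟩
      exact l1_inner_eq ε hε0 hε1 x hx
    · rintro rfl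
      exact ⟨lp.single 1 0 (1:ℝ), l1_single_norm_one 0,
        (l1_inner_eq _ hε0 hε1 _ (l1_single_norm_one 0)).symm⟩
  rw [hset, csInf_singleton]
end
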